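/- Let p be a prime with p > 250 and let m = min{k ∈ ℤ_{>0} : k ∤ p+1}. Then m ≤ ⌊√(2p/5)⌋. -/

import Mathlib

theorem stmt_3 (p m : ℕ) (hp : p.Prime) (hge : 250 < p)
    (hm : IsLeast {k : ℕ | 0 < k ∧ ¬ k ∣ p + 1} m) :
    m ≤ ⌊Real.sqrt (2 * p / 5)⌋₊ := by
  set n := ⌊Real.sqrt (2 * p / 5)⌋₊ with hn
  by_contra hlt
  push_neg at hlt
  -- every 0 < k ≤ n divides p+1
  have hdvd : ∀ k, 0 < k → k ≤ n → k ∣ p + 1 := by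
    intro k hk0 hkn
    by_contra hk
    have := hm.2 ⟨hk0, hk⟩
    omega
  -- n ≥ 10
  have h10 : 10 ≤ n := by
    rw [hn]
    apply Nat.le_floor
    rw [show ((10:ℕ):ℝ) = 10 by norm_num]
    rw [Real.le_sqrt' (by norm_num)]
    have : (251:ℝ) ≤ p := by exact_mod_cast hge
    nlinarith
  -- 2p/5 < (n+1)^2
  have hub : 2 * (p:ℝ) / 5 < ((n:ℝ) + 1) ^ 2 := by
    have h1 : Real.sqrt (2 * p / 5) < (n:ℝ) + 1 := by
      have := Nat.lt_succ_floor (Real.sqrt (2 * p / 5))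
      push_cast at this ⊢
      linarith
    have h2 : (0:ℝ) ≤ Real.sqrt (2 * p / 5) := Real.sqrt_nonneg _
    nlinarith [Real.sq_sqrt (show (0:ℝ) ≤ 2 * p / 5 by positivity)]
  have hubn : 2 * p < 5 * (n + 1) ^ 2 := by
    have : (2 * p : ℝ) < 5 * ((n:ℝ) + 1) ^ 2 := by linarith
    exact_mod_cast this
  -- divisibility
  have d1 : n ∣ p + 1 := hdvd n (by omega) le_rfl
  have d2 : (n - 1) ∣ p + 1 := hdvd (n - 1) (by omega) (by omega)
  have d3 : (n - 2) ∣ p + 1 := hdvd (n - 2) (by omega) (by omega)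
  have c12 : Nat.Coprime n (n - 1) := by
    have h : Nat.Coprime (1 + (n - 1)) (n - 1) :=
      Nat.coprime_add_self_left.mpr (Nat.coprime_one_left _)
    have e : 1 + (n - 1) = n := by omega
    rwa [e] at h
  have d12 : n * (n - 1) ∣ p + 1 := c12.mul_dvd_of_dvd_of_dvd d1 d2
  -- gcd (n-2) (n*(n-1)) divides 2
  have g1 : Nat.gcd (n - 2) n ∣ 2 := by
    have h := Nat.dvd_sub (Nat.gcd_dvd_right (n - 2) n) (Nat.gcd_dvd_left (n - 2) n)
    have : n - (n - 2) = 2 := by omega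
    rwa [this] at h
  have g2 : Nat.Coprime (n - 2) (n - 1) := by
    have h : Nat.Coprime (n - 2) ((n - 2) + 1) :=
      Nat.coprime_self_add_right.mpr (Nat.coprime_one_right _)
    have e : (n - 2) + 1 = n - 1 := by omega
    rwa [e] at h
  have g3 : Nat.gcd (n - 2) (n * (n - 1)) ∣ 2 := by
    have : Nat.gcd (n - 2) (n * (n - 1)) ∣ Nat.gcd (n - 2) n * Nat.gcd (n - 2) (n - 1) := gcd_mul_dvd_mul_gcd (n - 2) n (n - 1)
    rw [g2.gcd_eq_one, mul_one] at this
    exact this.trans g1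
  -- lcm divides p+1
  have hlcm : Nat.lcm (n - 2) (n * (n - 1)) ∣ p + 1 := Nat.lcm_dvd d3 d12
  have hlcmle : Nat.lcm (n - 2) (n * (n - 1)) ≤ p + 1 := Nat.le_of_dvd (by omega) hlcm
  have hprod : (n - 2) * (n * (n - 1)) = Nat.gcd (n - 2) (n * (n - 1)) * Nat.lcm (n - 2) (n * (n - 1)) :=
    (Nat.gcd_mul_lcm _ _).symm
  have hgle : Nat.gcd (n - 2) (n * (n - 1)) ≤ 2 := Nat.le_of_dvd (by norm_num) g3
  have key : (n - 2) * (n * (n - 1)) ≤ 2 * (p + 1) := by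
    calc (n - 2) * (n * (n - 1)) = Nat.gcd (n - 2) (n * (n - 1)) * Nat.lcm (n - 2) (n * (n - 1)) := hprod
    _ ≤ 2 * (p + 1) := Nat.mul_le_mul hgle hlcmle
  -- final arithmetic contradiction
  have h1 : n - 1 = n - 1 := rfl
  zify [show 1 ≤ n by omega, show 2 ≤ n by omega] at key
  have hN : (10:ℤ) ≤ (n:ℤ) := by exact_mod_cast h10
  have hub' : 2 * (p:ℤ) < 5 * ((n:ℤ) + 1) ^ 2 := by exact_mod_cast hubn
  nlinarith [hN, hub', key]
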